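/- If G is a graph in which each heavy vertex has at least three light neighbors, then for every heavy edge e of G, P(G) = P(G − e). -/

import Mathlib

namespace PaperPC

open SimpleGraph

variable {V : Type*}

/-- The degree of a vertex, via the cardinality of its neighbor set. -/
noncomputable def ndeg (G : SimpleGraph V) (v : V) : ℕ := (G.neighborSet v).ncard

/-- A linear forest: an acyclic graph of maximum degree at most 2,
i.e. a vertex-disjoint union of paths.  A spanning linear subforest of `G`
is exactly a path covering of `G` (isolated vertices are one-vertex paths). -/
def IsLinearForest (H : SimpleGraph V) : Prop :=
  H.IsAcyclic ∧ ∀ v, ndeg H v ≤ 2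

/-- The number of paths of a path covering = number of connected components. -/
noncomputable def numPaths (H : SimpleGraph V) : ℕ := Nat.card H.ConnectedComponent

/-- The path covering number `P(G)`. -/
noncomputable def pathCoverNumber (G : SimpleGraph V) : ℕ :=
  sInf {k | ∃ H ≤ G, IsLinearForest H ∧ numPaths H = k}

/-- `H` is a minimum path covering of `G`. -/
def IsMinPathCover (G H : SimpleGraph V) : Prop :=
  H ≤ G ∧ IsLinearForest H ∧ numPaths H = pathCoverNumber G

open scoped Classical in
/-- The path sequence of a path covering: the multiset of the numbers of vertices
of its paths (a multiset encodes the nondecreasing ordered sequence). -/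
noncomputable def pathSeq [Fintype V] (H : SimpleGraph V) : Multiset ℕ :=
  (Finset.univ : Finset H.ConnectedComponent).val.map fun c => c.supp.ncard

/-- `G` admits a unique path sequence. -/
def UniquePathSequence [Fintype V] (G : SimpleGraph V) : Prop :=
  ∀ H₁ H₂ : SimpleGraph V, IsMinPathCover G H₁ → IsMinPathCover G H₂ →
    pathSeq H₁ = pathSeq H₂

/-- Number of leaves (vertices of degree 1). -/
noncomputable def numLeaves (G : SimpleGraph V) : ℕ := {v | ndeg G v = 1}.ncard

/-- Number of heavy edges (edges both of whose endpoints have degree > 2). -/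
noncomputable def numHeavyEdges (G : SimpleGraph V) : ℕ :=
  {e ∈ G.edgeSet | ∀ v ∈ e, 2 < ndeg G v}.ncard

/-- Number of edges. -/
noncomputable def numEdges (G : SimpleGraph V) : ℕ := G.edgeSet.ncard

/-- A graph is 2-sparse if no two adjacent vertices both have degree > 2. -/
def TwoSparse (G : SimpleGraph V) : Prop :=
  ∀ u v, G.Adj u v → ndeg G u ≤ 2 ∨ ndeg G v ≤ 2

/-- `G` is a path graph. -/
def IsPathGraph (G : SimpleGraph V) : Prop := G.IsTree ∧ ∀ v, ndeg G v ≤ 2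

/-- `G` is a cycle graph. -/
def IsCycleGraph (G : SimpleGraph V) : Prop := G.Connected ∧ ∀ v, ndeg G v = 2

/-- A generalized star: a tree with exactly one heavy vertex (the center) in which
all vines have the same number of vertices (equivalently, all leaves are at the same
distance from the center). -/
def IsGenStar (G : SimpleGraph V) : Prop :=
  G.IsTree ∧ ∃ c k, 2 < ndeg G c ∧ (∀ v, v ≠ c → ndeg G v ≤ 2) ∧
    ∀ v, ndeg G v = 1 → G.dist c v = k

/-- An L(2,1)-labeling. -/
def IsL21Labeling (G : SimpleGraph V) (f : V → ℕ) : Prop :=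
  (∀ u v, G.Adj u v → 2 ≤ Nat.dist (f u) (f v)) ∧
  (∀ u v, G.dist u v = 2 → 1 ≤ Nat.dist (f u) (f v))

/-- `λ(G)`: the least `k` such that `G` has an L(2,1)-labeling with labels in `{0,…,k}`. -/
noncomputable def lambdaNum (G : SimpleGraph V) : ℕ :=
  sInf {k | ∃ f : V → ℕ, IsL21Labeling G f ∧ ∀ v, f v ≤ k}

/-- A λ-labeling: an L(2,1)-labeling with maximum label `λ(G)`. -/
def IsLambdaLabeling (G : SimpleGraph V) (f : V → ℕ) : Prop :=
  IsL21Labeling G f ∧ (∀ v, f v ≤ lambdaNum G) ∧ ∃ v, f v = lambdaNum G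

/-- The set of holes of a labeling: unused labels `h` with `1 ≤ h ≤ λ(G) - 1`. -/
def labHoles (G : SimpleGraph V) (f : V → ℕ) : Set ℕ :=
  {h | 1 ≤ h ∧ h + 1 ≤ lambdaNum G ∧ ∀ v, f v ≠ h}

/-- The hole index `ρ(G)`: minimum number of holes over all λ-labelings. -/
noncomputable def holeIndex (G : SimpleGraph V) : ℕ :=
  sInf {k | ∃ f : V → ℕ, IsLambdaLabeling G f ∧ (labHoles G f).ncard = k}

open scoped Classical in
/-- The island sequence of a labeling: the multiset of cardinalities of the maximal
intervals `[a,b]` of consecutive integers all used by the labeling. -/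
noncomputable def islandSeq [Fintype V] (G : SimpleGraph V) (f : V → ℕ) : Multiset ℕ :=
  (((Finset.range (lambdaNum G + 1)) ×ˢ (Finset.range (lambdaNum G + 1))).filter
    (fun q => q.1 ≤ q.2 ∧ (∀ x ∈ Finset.Icc q.1 q.2, ∃ v, f v = x) ∧
      (q.1 = 0 ∨ ∀ v, f v ≠ q.1 - 1) ∧ ∀ v, f v ≠ q.2 + 1)).val.map
    fun q => q.2 - q.1 + 1

/-- `G` admits (at least) two distinct island sequences. -/
def MultipleIslandSequences [Fintype V] (G : SimpleGraph V) : Prop :=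
  ∃ f g : V → ℕ, IsLambdaLabeling G f ∧ IsLambdaLabeling G g ∧
    (labHoles G f).ncard = holeIndex G ∧ (labHoles G g).ncard = holeIndex G ∧
    islandSeq G f ≠ islandSeq G g

/-- A vine: a maximal path one of whose endpoints (`a`) is a leaf and all of whose
vertices are light.  Maximality: any light vertex adjacent to the other end already
lies on the path. -/
def IsVine (G : SimpleGraph V) {a b : V} (p : G.Walk a b) : Prop :=
  p.IsPath ∧ ndeg G a = 1 ∧ (∀ v ∈ p.support, ndeg G v ≤ 2) ∧
  ∀ c, G.Adj b c → ndeg G c ≤ 2 → c ∈ p.support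

/-- A vine with center `v`: the (heavy) vertex adjacent to the non-leaf end of the vine. -/
def IsVineWithCenter (G : SimpleGraph V) {a b : V} (p : G.Walk a b) (v : V) : Prop :=
  IsVine G p ∧ G.Adj b v ∧ 2 < ndeg G v

/-- The matching number of the subgraph of `G` induced by `S`. -/
noncomputable def matchingNumberOn (G : SimpleGraph V) (S : Set V) : ℕ :=
  sSup {k | ∃ M : Set (Sym2 V), M ⊆ G.edgeSet ∧ (∀ e ∈ M, ∀ v ∈ e, v ∈ S) ∧
    (∀ e ∈ M, ∀ f ∈ M, e ≠ f → ∀ v, v ∈ e → v ∉ f) ∧ M.ncard = k}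

/-- Labels used in the family `F`: `A`, or `B k` where `k` records the number of
vertices of each vine of the labeled generalized star that produced the label. -/
inductive Lab | A | B (k : ℕ)

/-- A labeled generalized star with center `c` whose vines have `k` vertices each
(equivalently, every leaf is at distance `k` from `c`); the degenerate case
`deg c = 2` is the convention regarding a path of length `2k` as a labeled
generalized star with two vines.  The neighbors of the center are labeled `B k`,
the other non-leaf vertices (and the center) are labeled `A`, leaves are unlabeled. -/
def IsLGenStar {W : Type*} (H : SimpleGraph W) (c : W) (k : ℕ)
    (lab : W → Option Lab) : Prop :=
  H.IsTree ∧ 2 ≤ ndeg H c ∧ (∀ v, v ≠ c → ndeg H v ≤ 2) ∧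
  (∀ v, ndeg H v = 1 → H.dist c v = k) ∧
  lab c = some Lab.A ∧
  (∀ v, H.Adj c v → lab v = some (Lab.B k)) ∧
  (∀ v, v ≠ c → ¬H.Adj c v → ndeg H v = 1 → lab v = none) ∧
  (∀ v, v ≠ c → ¬H.Adj c v → 2 ≤ ndeg H v → lab v = some Lab.A)

/-- A labeled path: a path with at least three vertices, non-leaf vertices labeled `A`. -/
def IsLPath {W : Type*} (H : SimpleGraph W) (lab : W → Option Lab) : Prop :=
  H.IsTree ∧ (∀ v, ndeg H v ≤ 2) ∧ 3 ≤ Nat.card W ∧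
  (∀ v, ndeg H v = 1 → lab v = none) ∧
  ∀ v, 2 ≤ ndeg H v → lab v = some Lab.A

/-- The induced subgraph of `T` on `s` is a labeled generalized star. -/
def LGenStarOn (T : SimpleGraph V) (s : Set V) (c : V) (k : ℕ)
    (lab : V → Option Lab) : Prop :=
  ∃ hc : c ∈ s, IsLGenStar (T.induce s) ⟨c, hc⟩ k fun v => lab v.1

/-- The induced subgraph of `T` on `s` is a labeled path. -/
def LPathOn (T : SimpleGraph V) (s : Set V) (lab : V → Option Lab) : Prop :=
  IsLPath (T.induce s) fun v => lab v.1

/-- The family `F` of labeled trees, realized as induced subgraphs (on vertex sets `s`)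
of an ambient graph `T`:  start from a labeled generalized star with at least three
vines or from a labeled path, and repeatedly attach, via a single new edge, a labeled
generalized star with at least three vines at a vertex labeled `A` (Type-1), a labeled
path by one of its non-leaf vertices at a vertex labeled `A` (Type-2), or a labeled
generalized star whose vines have the same number of vertices `k` as those of the star
that labeled `u` with `B k`, at a vertex `u` labeled `B k` (Type-3). -/
inductive InF (T : SimpleGraph V) : Set V → (V → Option Lab) → Prop
  | base_star (s : Set V) (c : V) (k : ℕ) (lab : V → Option Lab) :
      LGenStarOn T s c k lab → 3 ≤ {w ∈ s | T.Adj c w}.ncard → InF T s lab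
  | base_path (s : Set V) (lab : V → Option Lab) :
      LPathOn T s lab → InF T s lab
  | type1 (s : Set V) (lab : V → Option Lab) (t : Set V) (lab' : V → Option Lab)
      (u c : V) (k : ℕ) :
      InF T s lab → Disjoint s t → u ∈ s → c ∈ t → lab u = some Lab.A →
      LGenStarOn T t c k lab' → 3 ≤ {w ∈ t | T.Adj c w}.ncard →
      (∀ x ∈ s, ∀ y ∈ t, (T.Adj x y ↔ x = u ∧ y = c)) →
      (∀ x ∈ s, lab' x = lab x) →
      InF T (s ∪ t) lab'
  | type2 (s : Set V) (lab : V → Option Lab) (t : Set V) (lab' : V → Option Lab)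
      (u v : V) :
      InF T s lab → Disjoint s t → u ∈ s → v ∈ t → lab u = some Lab.A →
      LPathOn T t lab' → 2 ≤ {w ∈ t | T.Adj v w}.ncard →
      (∀ x ∈ s, ∀ y ∈ t, (T.Adj x y ↔ x = u ∧ y = v)) →
      (∀ x ∈ s, lab' x = lab x) →
      InF T (s ∪ t) lab'
  | type3 (s : Set V) (lab : V → Option Lab) (t : Set V) (lab' : V → Option Lab)
      (u c : V) (k : ℕ) :
      InF T s lab → Disjoint s t → u ∈ s → c ∈ t → lab u = some (Lab.B k) →
      LGenStarOn T t c k lab' →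
      (∀ x ∈ s, ∀ y ∈ t, (T.Adj x y ↔ x = u ∧ y = c)) →
      (∀ x ∈ s, lab' x = lab x) →
      InF T (s ∪ t) lab'

/-- `G` is obtained from the tree `T` by expanding each edge of `T` into a complete
graph of arbitrary order: there is an embedding `ι` of the vertices of `T` and an
assignment `b` of a block of vertices of `G` to each edge of `T` such that an original
vertex lies in the block of an edge iff it is an endpoint of that edge, blocks of
distinct edges meet only in original vertices, every vertex of `G` lies in some block,
and two distinct vertices of `G` are adjacent iff they lie in a common block. -/
def IsBlockExpansion {U W : Type*} (T : SimpleGraph U) (G : SimpleGraph W) : Prop :=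
  ∃ (ι : U ↪ W) (b : Sym2 U → Set W),
    (∀ (u : U), ∀ e ∈ T.edgeSet, (ι u ∈ b e ↔ u ∈ e)) ∧
    (∀ e ∈ T.edgeSet, ∀ f ∈ T.edgeSet, e ≠ f → b e ∩ b f ⊆ Set.range ι) ∧
    (∀ w : W, ∃ e ∈ T.edgeSet, w ∈ b e) ∧
    (∀ x y : W, G.Adj x y ↔ x ≠ y ∧ ∃ e ∈ T.edgeSet, x ∈ b e ∧ y ∈ b e)


/-! ### Auxiliary lemmas for `deleteHeavyEdge_pathCoverNumber` -/

section DeleteHeavyEdgeAux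

open SimpleGraph

lemma reachable_sup_edge {K : SimpleGraph V} {u v x y : V}
    (h : (K ⊔ edge u v).Reachable x y) :
    K.Reachable x y ∨ (K.Reachable x u ∧ K.Reachable v y) ∨
      (K.Reachable x v ∧ K.Reachable u y) := by
  obtain ⟨w⟩ := h
  induction w with
  | nil => exact Or.inl (Reachable.refl _)
  | @cons a c d hadj q ih =>
    rcases hadj with hK | hE
    · rcases ih with h1 | ⟨h1, h2⟩ | ⟨h1, h2⟩
      · exact Or.inl (hK.reachable.trans h1)
      · exact Or.inr (Or.inl ⟨hK.reachable.trans h1, h2⟩)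
      · exact Or.inr (Or.inr ⟨hK.reachable.trans h1, h2⟩)
    · rw [edge_adj] at hE
      obtain ⟨⟨rfl, rfl⟩ | ⟨rfl, rfl⟩, hne⟩ := hE
      · rcases ih with h1 | ⟨h1, h2⟩ | ⟨h1, h2⟩
        · exact Or.inr (Or.inl ⟨Reachable.refl _, h1⟩)
        · exact Or.inr (Or.inl ⟨Reachable.refl _, h2⟩)
        · exact Or.inl h2
      · rcases ih with h1 | ⟨h1, h2⟩ | ⟨h1, h2⟩
        · exact Or.inr (Or.inr ⟨Reachable.refl _, h1⟩)
        · exact Or.inl h2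
        · exact Or.inr (Or.inr ⟨Reachable.refl _, h2⟩)

/-- The map on connected components induced by a subgraph relation. -/
noncomputable def compMap (K L : SimpleGraph V) (h : K ≤ L) :
    K.ConnectedComponent → L.ConnectedComponent :=
  ConnectedComponent.map (Hom.ofLE h)

lemma compMap_mk {K L : SimpleGraph V} (h : K ≤ L) (x : V) :
    compMap K L h (K.connectedComponentMk x) = L.connectedComponentMk x := rfl

lemma compMap_eq_cases {K : SimpleGraph V} {u v : V} {c d : K.ConnectedComponent}
    (h : compMap K (K ⊔ edge u v) le_sup_left c = compMap K (K ⊔ edge u v) le_sup_left d) :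
    c = d ∨ (c = K.connectedComponentMk u ∧ d = K.connectedComponentMk v) ∨
      (c = K.connectedComponentMk v ∧ d = K.connectedComponentMk u) := by
  revert h
  refine ConnectedComponent.ind₂ (fun x y h => ?_) c d
  rw [compMap_mk, compMap_mk, ConnectedComponent.eq] at h
  rcases reachable_sup_edge h with h1 | ⟨h1, h2⟩ | ⟨h1, h2⟩
  · exact Or.inl (ConnectedComponent.sound h1)
  · exact Or.inr (Or.inl ⟨ConnectedComponent.sound h1, ConnectedComponent.sound h2.symm⟩)
  · exact Or.inr (Or.inr ⟨ConnectedComponent.sound h1, ConnectedComponent.sound h2.symm⟩)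

lemma card_comps_le [Finite V] (K : SimpleGraph V) (u v : V) :
    Nat.card K.ConnectedComponent ≤ Nat.card (K ⊔ edge u v).ConnectedComponent + 1 := by
  classical
  set f : K.ConnectedComponent → (K ⊔ edge u v).ConnectedComponent ⊕ Unit := fun c =>
    if c = K.connectedComponentMk v then Sum.inr () else Sum.inl (compMap K _ le_sup_left c)
    with hf
  have hinj : Function.Injective f := by
    intro c d hcd
    by_cases hc : c = K.connectedComponentMk v <;>
      by_cases hd : d = K.connectedComponentMk v <;> simp [hf, hc, hd] at hcd
    · rw [hc, hd]
    · rcases compMap_eq_cases hcd with h | ⟨h1, h2⟩ | ⟨h1, h2⟩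
      · exact h
      · exact absurd h2 hd
      · exact absurd h1 hc
  calc Nat.card K.ConnectedComponent
      ≤ Nat.card ((K ⊔ edge u v).ConnectedComponent ⊕ Unit) :=
        Nat.card_le_card_of_injective f hinj
    _ = Nat.card (K ⊔ edge u v).ConnectedComponent + 1 := by
        rw [Nat.card_sum]; simp

lemma card_comps_sup_edge_add_one_le [Finite V] {K : SimpleGraph V} {u v : V}
    (huv : u ≠ v) (hnr : ¬K.Reachable u v) :
    Nat.card (K ⊔ edge u v).ConnectedComponent + 1 ≤ Nat.card K.ConnectedComponent := by
  classical
  have hsurj : Function.Surjective (compMap K (K ⊔ edge u v) le_sup_left) := by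
    intro t
    exact ConnectedComponent.ind (fun x => ⟨K.connectedComponentMk x, rfl⟩) t
  have key : compMap K (K ⊔ edge u v) le_sup_left (K.connectedComponentMk u) =
      compMap K (K ⊔ edge u v) le_sup_left (K.connectedComponentMk v) := by
    rw [compMap_mk, compMap_mk, ConnectedComponent.eq]
    exact Adj.reachable (by rw [sup_adj, edge_adj]; exact Or.inr ⟨Or.inl ⟨rfl, rfl⟩, huv⟩)
  set σ := Function.surjInv hsurj with hσdef
  have hσ : ∀ t, compMap K (K ⊔ edge u v) le_sup_left (σ t) = t :=
    fun t => Function.surjInv_eq hsurj t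
  set g : (K ⊔ edge u v).ConnectedComponent ⊕ Unit → K.ConnectedComponent := fun t =>
    match t with
    | Sum.inl t => if σ t = K.connectedComponentMk v then K.connectedComponentMk u else σ t
    | Sum.inr _ => K.connectedComponentMk v
    with hg
  have hmkuv : K.connectedComponentMk u ≠ K.connectedComponentMk v :=
    fun h => hnr (ConnectedComponent.eq.mp h)
  have hginj : Function.Injective g := by
    rintro (t₁ | ⟨⟩) (t₂ | ⟨⟩) h
    · simp only [hg] at h
      by_cases h1 : σ t₁ = K.connectedComponentMk v <;>
        by_cases h2 : σ t₂ = K.connectedComponentMk v <;> simp [h1, h2] at h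
      · rw [← hσ t₁, ← hσ t₂, h1, h2]
      · rw [← hσ t₁, ← hσ t₂, h1, ← h, key]
      · rw [← hσ t₁, ← hσ t₂, h2, h, key]
      · rw [← hσ t₁, ← hσ t₂, h]
    · exfalso
      simp only [hg] at h
      by_cases h1 : σ t₁ = K.connectedComponentMk v
      · rw [if_pos h1] at h; exact hmkuv h
      · rw [if_neg h1] at h; exact h1 h
    · exfalso
      simp only [hg] at h
      by_cases h2 : σ t₂ = K.connectedComponentMk v
      · rw [if_pos h2] at h; exact hmkuv h.symm
      · rw [if_neg h2] at h; exact h2 h.symm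
    · rfl
  calc Nat.card (K ⊔ edge u v).ConnectedComponent + 1
      = Nat.card ((K ⊔ edge u v).ConnectedComponent ⊕ Unit) := by rw [Nat.card_sum]; simp
    _ ≤ Nat.card K.ConnectedComponent := Nat.card_le_card_of_injective g hginj

lemma isAcyclic_sup_edge {K : SimpleGraph V} {u v : V} (hK : K.IsAcyclic)
    (hnr : ¬K.Reachable u v) : (K ⊔ edge u v).IsAcyclic := by
  have huvK : ∀ a b : V, (edge u v).Adj a b → s(a, b) = s(u, v) := by
    intro a b h
    rw [edge_adj] at h
    rcases h.1 with ⟨rfl, rfl⟩ | ⟨rfl, rfl⟩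
    · rfl
    · exact Sym2.eq_swap
  rw [isAcyclic_iff_forall_adj_isBridge]
  intro x y hxy
  rw [isBridge_iff]
  intro hreach
  by_cases hcase : s(x, y) = s(u, v)
  · have hle : (K ⊔ edge u v) \ fromEdgeSet {s(x, y)} ≤ K := by
      intro a b hab
      obtain ⟨h1, h2⟩ := hab
      rcases h1 with h1 | h1
      · exact h1
      · exfalso
        apply h2
        rw [fromEdgeSet_adj, Set.mem_singleton_iff, hcase]
        exact ⟨huvK a b h1, h1.ne⟩
    have hxyK : K.Reachable x y := hreach.mono hle
    rw [Sym2.eq_iff] at hcase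
    rcases hcase with ⟨rfl, rfl⟩ | ⟨rfl, rfl⟩
    · exact hnr hxyK
    · exact hnr hxyK.symm
  · have hxyK : K.Adj x y := by
      rcases (sup_adj _ _ _ _).mp hxy with h | h
      · exact h
      · exact absurd (huvK _ _ h) hcase
    have hbridge := (isAcyclic_iff_forall_adj_isBridge.mp hK) hxyK
    rw [isBridge_iff] at hbridge
    have hgr : (K ⊔ edge u v) \ fromEdgeSet {s(x, y)} =
        (K \ fromEdgeSet {s(x, y)}) ⊔ edge u v := by
      ext a b
      simp only [sdiff_adj, sup_adj]
      constructor
      · rintro ⟨hK' | hE, hne⟩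
        · exact Or.inl ⟨hK', hne⟩
        · exact Or.inr hE
      · rintro (⟨hK', hne⟩ | hE)
        · exact ⟨Or.inl hK', hne⟩
        · refine ⟨Or.inr hE, fun hc => hcase ?_⟩
          rw [fromEdgeSet_adj, Set.mem_singleton_iff] at hc
          rw [← hc.1, huvK a b hE]
    rw [deleteEdges, hgr] at hreach
    have hsd : K \ fromEdgeSet {s(x, y)} ≤ K := sdiff_le
    rcases reachable_sup_edge hreach with h1 | ⟨h1, h2⟩ | ⟨h1, h2⟩
    · exact hbridge h1
    · exact hnr ((h1.mono hsd).symm.trans (hxyK.reachable.trans (h2.mono hsd).symm))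
    · exact hnr ((h2.mono hsd).trans (hxyK.symm.reachable.trans (h1.mono hsd)))

lemma two_neighbors_of_internal {K : SimpleGraph V} {a b x : V} {p : K.Walk a b}
    (hp : p.IsPath) (hx : x ∈ p.support) (hxa : x ≠ a) (hxb : x ≠ b) :
    ∃ y z, y ≠ z ∧ K.Adj x y ∧ K.Adj x z ∧ y ∈ p.support ∧ z ∈ p.support := by
  obtain ⟨q, r, rfl⟩ := Walk.mem_support_iff_exists_append.mp hx
  have hq : ¬q.Nil := Walk.not_nil_of_ne (fun h => hxa h.symm)
  have hr : ¬r.Nil := Walk.not_nil_of_ne hxb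
  obtain ⟨z, hz, r', rfl⟩ := Walk.not_nil_iff.mp hr
  have hqr : ¬q.reverse.Nil := Walk.not_nil_of_ne hxa
  obtain ⟨y, hy, q', hq'⟩ := Walk.not_nil_iff.mp hqr
  have hysup : y ∈ q.support := by
    have h1 : y ∈ q.reverse.support := by
      rw [hq']
      simp [Walk.support_cons]
    rwa [Walk.support_reverse, List.mem_reverse] at h1
  have hzsup : z ∈ (Walk.cons hz r').support.tail := by
    simp [Walk.support_cons]
  have hnd := hp.support_nodup
  rw [Walk.support_append, List.nodup_append] at hnd
  have hyz : y ≠ z := fun h => hnd.2.2 y hysup z hzsup h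
  refine ⟨y, z, hyz, hy, hz, ?_, ?_⟩
  · rw [Walk.mem_support_append_iff]
    exact Or.inl hysup
  · rw [Walk.mem_support_append_iff]
    right
    simp [Walk.support_cons]

lemma support_closed [Finite V] {K : SimpleGraph V} (hdeg : ∀ x, ndeg K x ≤ 2)
    {a b : V} {p : K.Walk a b} (hp : p.IsPath) (hab : a ≠ b)
    (ha : ndeg K a ≤ 1) (hb : ndeg K b ≤ 1) :
    ∀ x ∈ p.support, ∀ y, K.Adj x y → y ∈ p.support := by
  intro x hx y hxy
  by_cases hxa : x = a
  · subst hxa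
    obtain ⟨c, hc, q, hq⟩ := Walk.not_nil_iff.mp (Walk.not_nil_of_ne (p := p) hab)
    have hyc : y = c :=
      (Set.ncard_le_one (Set.toFinite _)).mp ha y hxy c hc
    rw [hyc, hq]
    simp [Walk.support_cons]
  by_cases hxb : x = b
  · subst hxb
    have hrev : ¬p.reverse.Nil := Walk.not_nil_of_ne (p := p.reverse) (Ne.symm hab)
    obtain ⟨c, hc, q, hq⟩ := Walk.not_nil_iff.mp hrev
    have hyc : y = c :=
      (Set.ncard_le_one (Set.toFinite _)).mp hb y hxy c hc
    have hcsup : c ∈ p.reverse.support := by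
      rw [hq]; simp [Walk.support_cons]
    rw [Walk.support_reverse, List.mem_reverse] at hcsup
    rw [hyc]; exact hcsup
  · obtain ⟨y1, z1, hyz1, hy1, hz1, hy1s, hz1s⟩ :=
      two_neighbors_of_internal hp hx hxa hxb
    have hsub : ({y1, z1} : Set V) ⊆ K.neighborSet x := by
      rintro c (rfl | rfl)
      · exact hy1
      · exact hz1
    have hcard : (K.neighborSet x).ncard ≤ ({y1, z1} : Set V).ncard := by
      rw [Set.ncard_pair hyz1]
      exact hdeg x
    have hEq : ({y1, z1} : Set V) = K.neighborSet x :=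
      Set.eq_of_subset_of_ncard_le hsub hcard (Set.toFinite _)
    have : y ∈ ({y1, z1} : Set V) := by rw [hEq]; exact hxy
    rcases this with rfl | rfl
    · exact hy1s
    · exact hz1s

lemma walk_support_closed {K : SimpleGraph V} {a b : V} {p : K.Walk a b}
    (hclosed : ∀ x ∈ p.support, ∀ y, K.Adj x y → y ∈ p.support) :
    ∀ {s t : V} (_ : K.Walk s t), s ∈ p.support → t ∈ p.support := by
  intro s t w
  induction w with
  | nil => exact id
  | cons h q ih => exact fun hs => ih (hclosed _ hs _ h)

lemma no_three_ends [Finite V] {K : SimpleGraph V} (hdeg : ∀ x, ndeg K x ≤ 2)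
    {u w₁ w₂ : V} (hu : ndeg K u ≤ 1) (h1 : ndeg K w₁ ≤ 1) (h2 : ndeg K w₂ ≤ 1)
    (d1 : u ≠ w₁) (d2 : u ≠ w₂) (d3 : w₁ ≠ w₂)
    (r1 : K.Reachable u w₁) (r2 : K.Reachable u w₂) : False := by
  classical
  obtain ⟨w⟩ := r1
  set p := w.toPath with hpdef
  have hp : (p : K.Walk u w₁).IsPath := p.2
  have hcl := support_closed hdeg hp d1 hu h1
  obtain ⟨w'⟩ := r2
  have hw2 : w₂ ∈ (p : K.Walk u w₁).support :=
    walk_support_closed hcl w' (Walk.start_mem_support _)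
  obtain ⟨y, z, hyz, hy, hz, _, _⟩ :=
    two_neighbors_of_internal hp hw2 (Ne.symm d2) (Ne.symm d3)
  have : 1 < ndeg K w₂ := by
    rw [ndeg]
    exact (Set.one_lt_ncard (Set.toFinite _)).mpr ⟨y, hy, z, hz, hyz⟩
  omega

lemma ndeg_mono [Finite V] {H G : SimpleGraph V} (h : H ≤ G) (v : V) :
    ndeg H v ≤ ndeg G v :=
  Set.ncard_le_ncard (fun _ hx => h hx) (Set.toFinite _)

lemma isLinearForest_bot : IsLinearForest (⊥ : SimpleGraph V) := by
  constructor
  · intro v c hc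
    cases c with
    | nil => exact hc.ne_nil rfl
    | cons h q => exact h
  · intro v
    have : (⊥ : SimpleGraph V).neighborSet v = ∅ := by
      ext c; simp
    simp [ndeg, this]

lemma pcSet_nonempty (G : SimpleGraph V) :
    {k | ∃ H ≤ G, IsLinearForest H ∧ numPaths H = k}.Nonempty :=
  ⟨numPaths (⊥ : SimpleGraph V), ⊥, bot_le, isLinearForest_bot, rfl⟩

/-- A light vertex adjacent (in `G`) to `u` but not `H`-adjacent to `u` has
`H`-degree at most 1. -/
lemma light_ndeg_le_one [Finite V] {H G : SimpleGraph V} (hHG : H ≤ G) {u w : V}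
    (hG : G.Adj u w) (hH : ¬H.Adj u w) (hlight : ndeg G w ≤ 2) : ndeg H w ≤ 1 := by
  by_contra hcon
  push_neg at hcon
  have hsub : H.neighborSet w ⊆ G.neighborSet w := fun _ hx => hHG hx
  have hle : (G.neighborSet w).ncard ≤ (H.neighborSet w).ncard := le_trans hlight hcon
  have hEq : H.neighborSet w = G.neighborSet w :=
    Set.eq_of_subset_of_ncard_le hsub hle (Set.toFinite _)
  have : u ∈ H.neighborSet w := by
    rw [hEq]
    exact hG.symm
  exact hH this.symm

end DeleteHeavyEdgeAux

/-- **Lemma (Statement 13).** If each heavy vertex of `G` has at least three light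
neighbors, then for every heavy edge `e` of `G`, `P(G) = P(G − e)`. -/
theorem deleteHeavyEdge_pathCoverNumber {V : Type*} [Fintype V] (G : SimpleGraph V)
    (hh : ∀ v, 2 < ndeg G v → 3 ≤ {w | G.Adj v w ∧ ndeg G w ≤ 2}.ncard)
    (e : Sym2 V) (he : e ∈ G.edgeSet) (hheavy : ∀ v ∈ e, 2 < ndeg G v) :
    pathCoverNumber G = pathCoverNumber (G.deleteEdges {e}) := by
  classical
  -- Easy direction: `P(G) ≤ P(G - e)` since every linear subforest of `G - e` is one of `G`.
  have hdel_le : G.deleteEdges {e} ≤ G := by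
    intro a b hab
    exact hab.1
  have dir1 : pathCoverNumber G ≤ pathCoverNumber (G.deleteEdges {e}) := by
    obtain ⟨H, hle, hlf, hnum⟩ := Nat.sInf_mem (pcSet_nonempty (G.deleteEdges {e}))
    calc pathCoverNumber G ≤ numPaths H := Nat.sInf_le ⟨H, le_trans hle hdel_le, hlf, rfl⟩
      _ = pathCoverNumber (G.deleteEdges {e}) := hnum
  refine le_antisymm dir1 ?_
  -- Hard direction.
  obtain ⟨H, hHG, ⟨hac, hdeg⟩, hnum⟩ := Nat.sInf_mem (pcSet_nonempty G)
  rw [show sInf {k | ∃ H ≤ G, IsLinearForest H ∧ numPaths H = k} = pathCoverNumber G from rfl]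
    at hnum
  revert he hheavy
  induction e using Sym2.ind with
  | _ u v =>
  intro he hheavy
  rw [SimpleGraph.mem_edgeSet] at he
  have huv : u ≠ v := he.ne
  have hu : 2 < ndeg G u := hheavy u (Sym2.mem_mk_left u v)
  have hv : 2 < ndeg G v := hheavy v (Sym2.mem_mk_right u v)
  by_cases hHuv : H.Adj u v
  case neg =>
    -- `e` is not an edge of `H`, so `H` itself is a path covering of `G - e`.
    have hle : H ≤ G.deleteEdges {s(u, v)} := by
      intro a b hab
      refine ⟨hHG hab, fun hs => ?_⟩
      rw [fromEdgeSet_adj, Set.mem_singleton_iff, Sym2.eq_iff] at hs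
      rcases hs with ⟨⟨rfl, rfl⟩ | ⟨rfl, rfl⟩, -⟩
      · exact hHuv hab
      · exact hHuv hab.symm
    calc pathCoverNumber (G.deleteEdges {s(u, v)}) ≤ numPaths H :=
          Nat.sInf_le ⟨H, hle, ⟨hac, hdeg⟩, rfl⟩
      _ = pathCoverNumber G := hnum
  case pos =>
  -- `e ∈ H`.  Let `K := H - e`.
  set K := H.deleteEdges {s(u, v)} with hKdef
  have hKH : K ≤ H := by
    intro a b hab
    exact hab.1
  have hKG' : K ≤ G.deleteEdges {s(u, v)} := by
    intro a b hab
    exact ⟨hHG hab.1, hab.2⟩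
  have hKdeg : ∀ x, ndeg K x ≤ 2 := fun x => le_trans (ndeg_mono hKH x) (hdeg x)
  have hKacyc : K.IsAcyclic := by
    intro x c hc
    exact hac (c.mapLe hKH) (hc.mapLe hKH)
  -- `u` has `K`-degree at most 1.
  have hnsKu : K.neighborSet u = H.neighborSet u \ {v} := by
    ext c
    simp only [mem_neighborSet, hKdef, deleteEdges_adj, Set.mem_singleton_iff, Set.mem_diff,
      Sym2.congr_right]
  have hvHu : v ∈ H.neighborSet u := hHuv
  have hKu : ndeg K u ≤ 1 := by
    have h2 : ndeg H u ≤ 2 := hdeg u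
    rw [ndeg, hnsKu, Set.ncard_diff_singleton_of_mem hvHu]
    rw [ndeg] at h2
    omega
  -- `H` is recovered from `K` by adding back the edge `uv`; its components number
  -- at most one more than those of `H`.
  have hKHsup : K ⊔ SimpleGraph.edge u v = H := by
    ext a b
    simp only [sup_adj, hKdef, deleteEdges_adj, Set.mem_singleton_iff, edge_adj]
    constructor
    · rintro (⟨h, -⟩ | ⟨⟨rfl, rfl⟩ | ⟨rfl, rfl⟩, hne⟩)
      · exact h
      · exact hHuv
      · exact hHuv.symm
    · intro h
      by_cases hs : s(a, b) = s(u, v)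
      · rw [Sym2.eq_iff] at hs
        exact Or.inr ⟨hs, h.ne⟩
      · exact Or.inl ⟨h, hs⟩
  -- Find at least two light neighbors of `u` that are not `H`-adjacent to `u`.
  set A : Set V := {w | G.Adj u w ∧ ndeg G w ≤ 2} with hAdef
  have hA3 : 3 ≤ A.ncard := hh u hu
  have hAv : v ∉ A := fun hvA => by
    have := hvA.2
    omega
  have hAH : A ∩ H.neighborSet u ⊆ H.neighborSet u \ {v} := by
    rintro c ⟨hcA, hcH⟩
    exact ⟨hcH, fun hcv => hAv (by rwa [Set.mem_singleton_iff.mp hcv] at hcA)⟩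
  have hAHcard : (A ∩ H.neighborSet u).ncard ≤ 1 := by
    have h1 : (A ∩ H.neighborSet u).ncard ≤ (H.neighborSet u \ {v}).ncard :=
      Set.ncard_le_ncard hAH (Set.toFinite _)
    have h2 : ndeg H u ≤ 2 := hdeg u
    rw [ndeg] at h2
    rw [Set.ncard_diff_singleton_of_mem hvHu] at h1
    omega
  have hBcard : 2 ≤ (A \ H.neighborSet u).ncard := by
    have hdiff : A \ H.neighborSet u = A \ (A ∩ H.neighborSet u) := by
      ext c
      simp only [Set.mem_diff, Set.mem_inter_iff]
      tauto
    rw [hdiff, Set.ncard_diff Set.inter_subset_left (Set.toFinite _)]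
    omega
  obtain ⟨w₁, hw₁, w₂, hw₂, hw12⟩ :=
    (Set.one_lt_ncard (Set.toFinite _)).mp (by omega : 1 < (A \ H.neighborSet u).ncard)
  -- Each such light neighbor has `K`-degree at most 1.
  have hprop : ∀ w, w ∈ A \ H.neighborSet u → G.Adj u w ∧ w ≠ u ∧ w ≠ v ∧ ndeg K w ≤ 1 := by
    rintro w ⟨⟨hGuw, hlight⟩, hnH⟩
    have hwu : w ≠ u := fun h => G.irrefl (h ▸ hGuw)
    have hwv : w ≠ v := fun h => by
      rw [h] at hlight
      omega
    have hHw : ndeg H w ≤ 1 := light_ndeg_le_one hHG hGuw hnH hlight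
    have hKwns : K.neighborSet w = H.neighborSet w := by
      ext c
      simp only [mem_neighborSet, hKdef, deleteEdges_adj, Set.mem_singleton_iff]
      constructor
      · exact fun h => h.1
      · intro h
        refine ⟨h, fun hs => ?_⟩
        rw [Sym2.eq_iff] at hs
        rcases hs with ⟨rfl, rfl⟩ | ⟨rfl, rfl⟩
        · exact hwu rfl
        · exact hwv rfl
    refine ⟨hGuw, hwu, hwv, ?_⟩
    rw [ndeg, hKwns]
    exact hHw
  obtain ⟨hGw₁, hw₁u, hw₁v, hKw₁⟩ := hprop w₁ hw₁
  obtain ⟨hGw₂, hw₂u, hw₂v, hKw₂⟩ := hprop w₂ hw₂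
  -- One of `w₁, w₂` is not `K`-reachable from `u`.
  have hpick : ∃ w, G.Adj u w ∧ w ≠ u ∧ w ≠ v ∧ ndeg K w ≤ 1 ∧ ¬K.Reachable u w := by
    by_cases hr1 : K.Reachable u w₁
    · by_cases hr2 : K.Reachable u w₂
      · exact absurd (no_three_ends hKdeg hKu hKw₁ hKw₂ (Ne.symm hw₁u) (Ne.symm hw₂u)
          hw12 hr1 hr2) not_false
      · exact ⟨w₂, hGw₂, hw₂u, hw₂v, hKw₂, hr2⟩
    · exact ⟨w₁, hGw₁, hw₁u, hw₁v, hKw₁, hr1⟩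
  obtain ⟨w, hGuw, hwu, hwv, hKw, hnr⟩ := hpick
  have huw : u ≠ w := Ne.symm hwu
  -- The new linear forest `H' := K + uw`.
  set H' := K ⊔ SimpleGraph.edge u w with hH'def
  have hH'le : H' ≤ G.deleteEdges {s(u, v)} := by
    refine sup_le hKG' ?_
    intro a b hab
    rw [edge_adj] at hab
    have hsuw : s(a, b) = s(u, w) := by
      rcases hab.1 with ⟨rfl, rfl⟩ | ⟨rfl, rfl⟩
      · rfl
      · exact Sym2.eq_swap
    have hGab : G.Adj a b := by
      rcases hab.1 with ⟨rfl, rfl⟩ | ⟨rfl, rfl⟩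
      · exact hGuw
      · exact hGuw.symm
    refine ⟨hGab, fun hs => ?_⟩
    rw [fromEdgeSet_adj, hsuw, Set.mem_singleton_iff, Sym2.eq_iff] at hs
    rcases hs with ⟨⟨-, rfl⟩ | ⟨hu', -⟩, -⟩
    · exact hwv rfl
    · exact huv hu' 
  have hH'acyc : H'.IsAcyclic := isAcyclic_sup_edge hKacyc hnr
  have hH'deg : ∀ x, ndeg H' x ≤ 2 := by
    intro x
    by_cases hxu : x = u
    · subst hxu
      have hsub : H'.neighborSet x ⊆ insert w (K.neighborSet x) := by
        intro c hc
        rcases (sup_adj _ _ _ _).mp hc with h | h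
        · exact Set.mem_insert_of_mem _ h
        · rw [edge_adj] at h
          rcases h.1 with ⟨-, rfl⟩ | ⟨h1, -⟩
          · exact Set.mem_insert _ _
          · exact absurd h1 huw
      calc ndeg H' x ≤ (insert w (K.neighborSet x)).ncard :=
            Set.ncard_le_ncard hsub (Set.toFinite _)
        _ ≤ (K.neighborSet x).ncard + 1 := Set.ncard_insert_le _ _
        _ ≤ 2 := by
            have := hKu
            rw [ndeg] at this
            omega
    by_cases hxw : x = w
    · subst hxw
      have hsub : H'.neighborSet x ⊆ insert u (K.neighborSet x) := by
        intro c hc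
        rcases (sup_adj _ _ _ _).mp hc with h | h
        · exact Set.mem_insert_of_mem _ h
        · rw [edge_adj] at h
          rcases h.1 with ⟨h1, -⟩ | ⟨-, rfl⟩
          · exact absurd h1 hwu
          · exact Set.mem_insert _ _
      calc ndeg H' x ≤ (insert u (K.neighborSet x)).ncard :=
            Set.ncard_le_ncard hsub (Set.toFinite _)
        _ ≤ (K.neighborSet x).ncard + 1 := Set.ncard_insert_le _ _
        _ ≤ 2 := by
            have := hKw
            rw [ndeg] at this
            omega
    · have hsub : H'.neighborSet x ⊆ K.neighborSet x := by
        intro c hc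
        rcases (sup_adj _ _ _ _).mp hc with h | h
        · exact h
        · rw [edge_adj] at h
          rcases h.1 with ⟨rfl, -⟩ | ⟨rfl, -⟩
          · exact absurd rfl hxu
          · exact absurd rfl hxw
      calc ndeg H' x ≤ ndeg K x := Set.ncard_le_ncard hsub (Set.toFinite _)
        _ ≤ 2 := hKdeg x
  -- Component count of `H'` is at most that of `H`.
  have hcount : numPaths H' ≤ numPaths H := by
    have a1 : Nat.card (K ⊔ SimpleGraph.edge u w).ConnectedComponent + 1 ≤
        Nat.card K.ConnectedComponent := card_comps_sup_edge_add_one_le huw hnr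
    have a2 : Nat.card K.ConnectedComponent ≤
        Nat.card (K ⊔ SimpleGraph.edge u v).ConnectedComponent + 1 := card_comps_le K u v
    rw [hKHsup] at a2
    show Nat.card H'.ConnectedComponent ≤ Nat.card H.ConnectedComponent
    rw [hH'def]
    omega
  calc pathCoverNumber (G.deleteEdges {s(u, v)}) ≤ numPaths H' :=
        Nat.sInf_le ⟨H', hH'le, ⟨hH'acyc, hH'deg⟩, rfl⟩
    _ ≤ numPaths H := hcount
    _ = pathCoverNumber G := hnum

end PaperPC
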